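/- Let ν = 1 and 0 ≤ b < a. Then lim_{t→∞} t² (I(t) − C_1/t) = −C_1²/2; that is, I(t) = C_1/t − C_1²/(2t²) + o(t^{-2}) as t → ∞, where C_1 = (a² − b²)/2. -/

import Mathlib

open MeasureTheory Filter Topology

/-- `F ν x t = (x^{2ν}/(2^ν Γ(ν))) ∫_t^∞ s^{-(ν+1)} exp(-x²/(2s)) ds`. -/
noncomputable def F (ν x t : ℝ) : ℝ :=
  (x ^ (2 * ν) / (2 ^ ν * Real.Gamma ν)) *
    ∫ s in Set.Ioi t, s ^ (-(ν + 1)) * Real.exp (-x ^ 2 / (2 * s))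

lemma F1_integral (x t : ℝ) (hx : 0 < x) (ht : 0 < t) :
    ∫ s in Set.Ioi t, s ^ (-((1:ℝ) + 1)) * Real.exp (-x ^ 2 / (2 * s))
      = 2 / x ^ 2 - (2 / x ^ 2) * Real.exp (-x ^ 2 / (2 * t)) := by
  have hx2 : (0:ℝ) < x ^ 2 := by positivity
  have hEq : ∀ s ∈ Set.Ioi t, s ^ (-((1:ℝ) + 1)) * Real.exp (-x ^ 2 / (2 * s))
      = (s ^ 2)⁻¹ * Real.exp (-x ^ 2 / (2 * s)) := by
    intro s hs
    have hs0 : 0 < s := ht.trans hs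
    rw [show (-((1:ℝ)+1)) = -(2:ℝ) by norm_num, Real.rpow_neg hs0.le,
      Real.rpow_two]
  rw [setIntegral_congr_fun measurableSet_Ioi hEq]
  set g : ℝ → ℝ := fun s => (2 / x ^ 2) * Real.exp (-x ^ 2 / (2 * s)) with hg
  have hderiv : ∀ s ∈ Set.Ioi t, HasDerivAt g ((s ^ 2)⁻¹ * Real.exp (-x ^ 2 / (2 * s))) s := by
    intro s hs
    have hs0 : 0 < s := ht.trans hs
    have h1 : HasDerivAt (fun s : ℝ => (-x ^ 2 / 2) * s⁻¹)
        ((-x ^ 2 / 2) * (-(s ^ 2)⁻¹)) s := (hasDerivAt_inv hs0.ne').const_mul _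
    have h2 := (h1.exp).const_mul (2 / x ^ 2)
    have hfun : (fun s : ℝ => (2 / x ^ 2) * Real.exp ((-x ^ 2 / 2) * s⁻¹)) = g := by
      funext s
      rcases eq_or_ne s 0 with rfl | hs
      · simp [g]
      · congr 1
        congr 1
        field_simp
    rw [hfun] at h2
    refine h2.congr_deriv ?_
    have : (-x ^ 2 / 2) * s⁻¹ = -x ^ 2 / (2 * s) := by field_simp
    rw [this]
    field_simp
  have hmeas : AEStronglyMeasurable
      (fun s : ℝ => (s ^ 2)⁻¹ * Real.exp (-x ^ 2 / (2 * s)))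
      (volume.restrict (Set.Ioi t)) := by
    apply ContinuousOn.aestronglyMeasurable _ measurableSet_Ioi
    intro s hs
    have hs0 : 0 < s := ht.trans hs
    exact ((((continuous_pow 2).continuousAt).inv₀ (by positivity)).mul
      ((Real.continuous_exp.continuousAt).comp
        (ContinuousAt.div continuousAt_const
          ((continuous_const.mul continuous_id).continuousAt) (by simp [hs0.ne'])))).continuousWithinAt
  have hint : IntegrableOn (fun s : ℝ => (s ^ 2)⁻¹ * Real.exp (-x ^ 2 / (2 * s)))
      (Set.Ioi t) := by
    apply Integrable.mono' (integrableOn_Ioi_rpow_of_lt (by norm_num : (-2:ℝ) < -1) ht) hmeas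
    filter_upwards [ae_restrict_mem measurableSet_Ioi] with s hs
    have hs0 : 0 < s := ht.trans hs
    have he : Real.exp (-x ^ 2 / (2 * s)) ≤ 1 := by
      rw [Real.exp_le_one_iff]
      have : (0:ℝ) < 2 * s := by positivity
      exact div_nonpos_of_nonpos_of_nonneg (neg_nonpos.mpr (by positivity)) this.le
    have h0 : (0:ℝ) ≤ (s ^ 2)⁻¹ := by positivity
    rw [Real.norm_eq_abs, abs_of_nonneg (by positivity)]
    calc (s ^ 2)⁻¹ * Real.exp (-x ^ 2 / (2 * s)) ≤ (s ^ 2)⁻¹ * 1 := by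
          exact mul_le_mul_of_nonneg_left he h0
      _ = s ^ (-2:ℝ) := by
          rw [mul_one, Real.rpow_neg hs0.le, Real.rpow_two]
  have hlim : Tendsto g atTop (𝓝 (2 / x ^ 2)) := by
    have h1 : Tendsto (fun s : ℝ => -x ^ 2 / (2 * s)) atTop (𝓝 0) := by
      apply Tendsto.div_atTop tendsto_const_nhds
      exact (tendsto_id.const_mul_atTop (by norm_num : (0:ℝ) < 2))
    have := (Real.continuous_exp.continuousAt.tendsto.comp h1).const_mul (2 / x ^ 2)
    simpa using this
  have hcont : ContinuousWithinAt g (Set.Ici t) t := by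
    apply ContinuousAt.continuousWithinAt
    exact (Real.continuous_exp.continuousAt.comp
      (ContinuousAt.div continuousAt_const
        ((continuous_const.mul continuous_id).continuousAt) (by simp [ht.ne']))).const_mul _
  rw [integral_Ioi_of_hasDerivAt_of_tendsto hcont hderiv hint hlim]

lemma F1_eq (x t : ℝ) (hx : 0 ≤ x) (ht : 0 < t) :
    F 1 x t = 1 - Real.exp (-x ^ 2 / (2 * t)) := by
  rcases eq_or_lt_of_le hx with rfl | hx
  · simp [F, Real.zero_rpow (by norm_num : (2:ℝ) * 1 ≠ 0)]
  · have hx2 : (0:ℝ) < x ^ 2 := by positivity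
    rw [F, F1_integral x t hx ht]
    rw [Real.Gamma_one, Real.rpow_one, show (2:ℝ) * 1 = ((2:ℕ):ℝ) by norm_num,
      Real.rpow_natCast]
    field_simp
    ring

theorem stmt_15 (a b : ℝ) (hb : 0 ≤ b) (hba : b < a) :
    Tendsto (fun t : ℝ =>
        t ^ 2 *
          ((F 1 a t - F 1 b t) / (1 - F 1 b t) - ((a ^ 2 - b ^ 2) / 2) / t))
      atTop
      (nhds (-((a ^ 2 - b ^ 2) / 2) ^ 2 / 2)) := by
  set C : ℝ := (a ^ 2 - b ^ 2) / 2 with hCdef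
  have hC : 0 < C := by
    have : b ^ 2 < a ^ 2 := by nlinarith
    simp only [hCdef]; linarith
  -- remainder term
  set h : ℝ → ℝ := fun t => Real.exp (-C / t) - (1 + (-C / t) + (-C / t) ^ 2 / 2) with hh
  have key : Tendsto (fun t : ℝ => t ^ 2 * h t) atTop (𝓝 0) := by
    apply squeeze_zero_norm' (a := fun t : ℝ => (2 * C ^ 3 / 9) / t)
    · filter_upwards [eventually_ge_atTop (max 1 C), eventually_gt_atTop 0] with t htm ht0
      have ht1 : (1:ℝ) ≤ t := le_trans (le_max_left _ _) htm
      have htC : C ≤ t := le_trans (le_max_right _ _) htm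
      have habs : |(-C / t)| ≤ 1 := by
        rw [abs_div, abs_neg, abs_of_nonneg hC.le, abs_of_pos ht0]
        rw [div_le_one ht0]; exact htC
      have hbound := Real.exp_bound habs (by norm_num : 0 < 3)
      have hsum : ∑ m ∈ Finset.range 3, (-C / t) ^ m / (m.factorial : ℝ)
          = 1 + (-C / t) + (-C / t) ^ 2 / 2 := by
        norm_num [Finset.sum_range_succ]
      rw [hsum] at hbound
      have hbound' : |h t| ≤ (C / t) ^ 3 * (2 / 9) := by
        refine hbound.trans (le_of_eq ?_)
        rw [abs_div, abs_neg, abs_of_nonneg hC.le, abs_of_pos ht0]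
        norm_num [Nat.factorial]
      rw [norm_mul, Real.norm_eq_abs, Real.norm_eq_abs, abs_of_nonneg (by positivity : (0:ℝ) ≤ t ^ 2)]
      calc t ^ 2 * |h t| ≤ t ^ 2 * ((C / t) ^ 3 * (2 / 9)) := by
            exact mul_le_mul_of_nonneg_left hbound' (by positivity)
        _ = (2 * C ^ 3 / 9) / t := by field_simp
    · exact Tendsto.div_atTop tendsto_const_nhds tendsto_id
  have main : Tendsto (fun t : ℝ => -C ^ 2 / 2 - t ^ 2 * h t) atTop (𝓝 (-C ^ 2 / 2 - 0)) :=
    tendsto_const_nhds.sub key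
  rw [sub_zero] at main
  have : Tendsto (fun t : ℝ =>
      t ^ 2 * ((F 1 a t - F 1 b t) / (1 - F 1 b t) - C / t)) atTop (𝓝 (-C ^ 2 / 2)) := by
    apply main.congr'
    filter_upwards [eventually_gt_atTop 0] with t ht
    rw [F1_eq a t (hb.trans hba.le) ht, F1_eq b t hb ht]
    have hI : (1 - Real.exp (-a ^ 2 / (2 * t)) - (1 - Real.exp (-b ^ 2 / (2 * t)))) /
        (1 - (1 - Real.exp (-b ^ 2 / (2 * t)))) = 1 - Real.exp (-C / t) := by
      have harg : -a ^ 2 / (2 * t) - (-b ^ 2 / (2 * t)) = -C / t := by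
        field_simp [hCdef]; ring
      rw [show (1 - Real.exp (-a ^ 2 / (2 * t)) - (1 - Real.exp (-b ^ 2 / (2 * t))))
          = Real.exp (-b ^ 2 / (2 * t)) - Real.exp (-a ^ 2 / (2 * t)) by ring,
        show (1 - (1 - Real.exp (-b ^ 2 / (2 * t)))) = Real.exp (-b ^ 2 / (2 * t)) by ring]
      rw [sub_div, div_self (Real.exp_ne_zero _), ← Real.exp_sub, harg]
    rw [hI, hh]
    field_simp
    ring
  exact this
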